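/- The affine bijections A, B, C, D of (ZMod 2)⟦X⟧ satisfy the wreath recursion of the automaton 𝒜, namely for every h ∈ (ZMod 2)⟦X⟧: A(X·h) = 1 + X·B(h), A(1 + X·h) = X·D(h), B(X·h) = 1 + X·D(h), B(1 + X·h) = X·B(h), C(X·h) = X·A(h), C(1 + X·h) = 1 + X·C(h), D(X·h) = X·C(h), and D(1 + X·h) = 1 + X·A(h). -/

import Mathlib

open PowerSeries

noncomputable section

/-- The ring of formal power series over the field with two elements. -/
abbrev R : Type := PowerSeries (ZMod 2)

/-- The multiplier `f = (1+X+X²)·(1+X²)⁻¹`. -/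
def f : R := (1 + X + X ^ 2) * (1 + X ^ 2)⁻¹

/-- `g_a = ((1+X)⁻¹)³`. -/
def ga : R := ((1 + X)⁻¹) ^ 3

/-- `g_b = (1+X+X²)·((1+X)⁻¹)³`. -/
def gb : R := (1 + X + X ^ 2) * ((1 + X)⁻¹) ^ 3

/-- `g_c = X·((1+X)⁻¹)³`. -/
def gc : R := X * ((1 + X)⁻¹) ^ 3

/-- `g_d = X²·((1+X)⁻¹)³`. -/
def gd : R := X ^ 2 * ((1 + X)⁻¹) ^ 3

lemma constantCoeff_f_ne_zero : constantCoeff (R := ZMod 2) f ≠ 0 := by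
  simp [f, map_mul, map_add, map_pow, PowerSeries.constantCoeff_inv]

/-- `f` as a unit of `R`. -/
def fU : Rˣ := Units.mkOfMulEqOne f f⁻¹ (PowerSeries.mul_inv_cancel f constantCoeff_f_ne_zero)

/-- The affine bijection `h ↦ h·u + g` for a unit `u` and `g : R`. -/
def affine (u : Rˣ) (g : R) : Equiv.Perm R := (Units.mulRight u).trans (Equiv.addRight g)

@[simp] lemma affine_apply (u : Rˣ) (g h : R) : affine u g h = h * u + g := rfl

/-- The affine bijection `A : h ↦ h·f + g_a`. -/
def A : Equiv.Perm R := affine fU ga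

/-- The affine bijection `B : h ↦ h·f + g_b`. -/
def B : Equiv.Perm R := affine fU gb

/-- The affine bijection `C : h ↦ h·f + g_c`. -/
def C : Equiv.Perm R := affine fU gc

/-- The affine bijection `D : h ↦ h·f + g_d`. -/
def D : Equiv.Perm R := affine fU gd

end

section Aux

open PowerSeries

local notation "XX" => (PowerSeries.X : R)

lemma two_eq_zero : (2 : R) = 0 := by
  have h : (PowerSeries.C (R := ZMod 2)) (2 : ZMod 2) = (2 : R) := map_ofNat _ 2
  rw [← h, show (2 : ZMod 2) = 0 from rfl, map_zero]

lemma hu : (1 + XX) * (1 + XX)⁻¹ = 1 :=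
  PowerSeries.mul_inv_cancel _ (by simp)

lemma key : ((1 : R) + XX ^ 2)⁻¹ = ((1 + XX)⁻¹) ^ 2 := by
  have h12 : ((1 : R) + XX ^ 2) = (1 + XX) ^ 2 := by
    linear_combination (-XX) * two_eq_zero
  rw [h12]
  rw [PowerSeries.inv_eq_iff_mul_eq_one (by simp)]
  calc ((1 + XX)⁻¹) ^ 2 * (1 + XX) ^ 2 = ((1 + XX) * (1 + XX)⁻¹) ^ 2 := by ring
  _ = 1 := by rw [hu]; ring

lemma fU_val : (fU : R) = f := rfl

lemma f_eq : f = (1 + XX + XX ^ 2) * ((1 + XX)⁻¹) ^ 2 := by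
  rw [f, key]

end Aux

/-- The affine bijections `A`, `B`, `C`, `D` of `(ZMod 2)⟦X⟧` satisfy the wreath recursion of the
automaton `𝒜`: `a = (b,d)σ`, `b = (d,b)σ`, `c = (a,c)`, `d = (c,a)`, where the boundary of the
binary tree is identified with power series. -/
theorem wreath_recursion (h : R) :
    A (X * h) = 1 + X * B h ∧
    A (1 + X * h) = X * D h ∧
    B (X * h) = 1 + X * D h ∧
    B (1 + X * h) = X * B h ∧
    _root_.C (X * h) = X * A h ∧
    _root_.C (1 + X * h) = 1 + X * _root_.C h ∧
    D (X * h) = X * _root_.C h ∧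
    D (1 + X * h) = 1 + X * A h := by
  have h2 := two_eq_zero
  have hu' := hu
  set u : R := (1 + X)⁻¹ with hu_def
  set w : R := (1 + X) * u with hw_def
  simp only [A, B, _root_.C, D, affine_apply, fU_val, f_eq, ga, gb, gc, gd, ← hu_def]
  refine ⟨?_, ?_, ?_, ?_, ?_, ?_, ?_, ?_⟩
  · linear_combination (w ^ 2 + w + 1) * hu' - u ^ 3 * (2 * X + 2 * X ^ 2 + X ^ 3) * h2
  · linear_combination (w ^ 2 + 2 * w + 2 - X * u ^ 2) * hu' +
      (1 - X * u ^ 2 - X * u ^ 3 - X ^ 2 * u ^ 3 - X ^ 3 * u ^ 3) * h2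
  · linear_combination (w ^ 2 + w + 1) * hu' - u ^ 3 * (X + X ^ 2 + X ^ 3) * h2
  · linear_combination (-(1 + X + X ^ 2) * u ^ 2) * hu' + ((1 + X + X ^ 2) * u ^ 3) * h2
  · ring
  · linear_combination (w + 1 + X * u ^ 2) * hu' - X ^ 2 * u ^ 3 * h2
  · ring
  · linear_combination (w + 1 - X * u ^ 2) * hu' + (X ^ 2 * u ^ 3 - X * u ^ 2) * h2
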